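/- arXiv:2010.16315 — 2 statements merged into one kernel-verified Lean document; each statement's English description precedes it below -/
import Mathlib

section
/- If G is a connected graph of order n with γ(G) = ⌈n/(Δ(G)+1)⌉, then th_pd×(G) = ⌈n/(Δ(G)+1)⌉. -/
open SimpleGraph Set

variable {V : Type*} {W : Type*}

/-- The closed neighborhood of a set `S`. -/
def closedNbhdSet (G : SimpleGraph V) (S : Set V) : Set V :=
  S ∪ {w | ∃ u ∈ S, G.Adj u w}

/-- One round of the zero forcing propagation step. -/
def pdStep (G : SimpleGraph V) (A : Set V) : Set V :=
  A ∪ {w | ∃ u ∈ A, G.neighborSet u \ A = {w}}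

/-- `obs G S k` is the set `P^[k](S)` of vertices observed after round `k`. -/
def obs (G : SimpleGraph V) (S : Set V) : ℕ → Set V
  | 0 => S
  | 1 => closedNbhdSet G S
  | (n + 2) => pdStep G (obs G S (n + 1))

/-- `S` is a power dominating set. -/
def IsPDS (G : SimpleGraph V) (S : Set V) : Prop :=
  ∃ t, obs G S t = Set.univ

/-- The power propagation time `pt_pd(G;S)`: least positive `t` with `P^[t](S) = V(G)`. -/
noncomputable def ptpd (G : SimpleGraph V) (S : Set V) : ℕ :=
  sInf {t | 1 ≤ t ∧ obs G S t = Set.univ}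

/-- `S` is a dominating set. -/
def IsDomSet (G : SimpleGraph V) (S : Set V) : Prop :=
  closedNbhdSet G S = Set.univ

/-- The domination number `γ(G)`. -/
noncomputable def gamma (G : SimpleGraph V) : ℕ :=
  sInf {k | ∃ S : Set V, IsDomSet G S ∧ S.ncard = k}

/-- The power domination number `γ_P(G)`. -/
noncomputable def gammaP (G : SimpleGraph V) : ℕ :=
  sInf {k | ∃ S : Set V, IsPDS G S ∧ S.ncard = k}

/-- The product power throttling number `th_pd^×(G)`. -/
noncomputable def thpd (G : SimpleGraph V) : ℕ :=
  sInf {m | ∃ S : Set V, IsPDS G S ∧ m = S.ncard * ptpd G S}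

/-- The power propagation time of `G`: minimum over minimum power dominating sets. -/
noncomputable def ptG (G : SimpleGraph V) : ℕ :=
  sInf {t | ∃ S : Set V, IsPDS G S ∧ S.ncard = gammaP G ∧ t = ptpd G S}

/-- `newObs G S k` is `P^(k)(S)`, the set of vertices first observed in round `k`. -/
def newObs (G : SimpleGraph V) (S : Set V) : ℕ → Set V
  | 0 => S
  | (k + 1) => obs G S (k + 1) \ obs G S k

/-- `rd G S v` is the round in which `v` is first observed. -/
noncomputable def rd (G : SimpleGraph V) (S : Set V) (v : V) : ℕ :=
  sInf {k | v ∈ obs G S k}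

section Aux

variable (G : SimpleGraph V) (S : Set V)

lemma obs_succ_mono (k : ℕ) : obs G S k ⊆ obs G S (k+1) := by
  match k with
  | 0 => exact Set.subset_union_left
  | n+1 => exact Set.subset_union_left

lemma obs_mono {k l : ℕ} (h : k ≤ l) : obs G S k ⊆ obs G S l := by
  induction l with
  | zero => rw [Nat.le_zero.mp h]
  | succ n ih =>
    rcases Nat.lt_or_ge k (n+1) with h' | h'
    · exact (ih (Nat.lt_succ_iff.mp h')).trans (obs_succ_mono G S n)
    · rw [Nat.le_antisymm h h']

variable {G S} (hP : ∃ T, obs G S T = Set.univ)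

include hP in
lemma rd_spec (v : V) : v ∈ obs G S (rd G S v) := by
  obtain ⟨T, hT⟩ := hP
  have hne : {k | v ∈ obs G S k}.Nonempty :=
    ⟨T, show v ∈ obs G S T by rw [hT]; exact Set.mem_univ v⟩
  exact Nat.sInf_mem hne

lemma rd_le {v : V} {k : ℕ} (h : v ∈ obs G S k) : rd G S v ≤ k := Nat.sInf_le h

include hP in
lemma mem_obs_of_rd_le {v : V} {k : ℕ} (h : rd G S v ≤ k) : v ∈ obs G S k :=
  obs_mono G S h (rd_spec hP v)

include hP in
lemma forcer_exists {v : V} (hv : 2 ≤ rd G S v) :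
    ∃ u, u ∈ obs G S (rd G S v - 1) ∧ G.neighborSet u \ obs G S (rd G S v - 1) = {v} := by
  obtain ⟨m, hm⟩ : ∃ m, rd G S v = m + 2 := ⟨rd G S v - 2, by omega⟩
  have hmem : v ∈ obs G S (m + 2) := by rw [← hm]; exact rd_spec hP v
  have hnot : v ∉ obs G S (m + 1) := fun hc => by have := rd_le hc; omega
  have : rd G S v - 1 = m + 1 := by omega
  rw [this]
  rcases hmem with hmem | hmem
  · exact absurd hmem hnot
  · exact hmem

end Aux

open Classical in
noncomputable def forcer (G : SimpleGraph V) (S : Set V) (v : V) : V :=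
  if h : 2 ≤ rd G S v ∧ ∃ u, u ∈ obs G S (rd G S v - 1) ∧
      G.neighborSet u \ obs G S (rd G S v - 1) = {v} then h.2.choose else v

section Aux2

variable {G : SimpleGraph V} {S : Set V} (hP : ∃ T, obs G S T = Set.univ)

lemma forcer_eq_self {v : V} (hv : rd G S v ≤ 1) : forcer G S v = v := by
  rw [forcer, dif_neg]
  rintro ⟨h1, -⟩; omega

include hP in
lemma forcer_spec {v : V} (hv : 2 ≤ rd G S v) :
    forcer G S v ∈ obs G S (rd G S v - 1) ∧
      G.neighborSet (forcer G S v) \ obs G S (rd G S v - 1) = {v} := by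
  have hex := forcer_exists hP hv
  rw [forcer, dif_pos ⟨hv, hex⟩]
  exact hex.choose_spec

include hP in
lemma rd_forcer_lt {v : V} (hv : 2 ≤ rd G S v) : rd G S (forcer G S v) < rd G S v :=
  lt_of_le_of_lt (rd_le (forcer_spec hP hv).1) (by omega)

include hP in
lemma forcer_inj_aux {x v : V} (hx : 2 ≤ rd G S x) (hv : 2 ≤ rd G S v)
    (hlt : rd G S x < rd G S v) (h : forcer G S x = forcer G S v) : False := by
  obtain ⟨hu1, hu2⟩ := forcer_spec hP hx
  obtain ⟨hw1, hw2⟩ := forcer_spec hP hv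
  rw [h] at hu2
  have hvmem : v ∈ G.neighborSet (forcer G S v) \ obs G S (rd G S v - 1) := by
    rw [hw2]; rfl
  have hxin : x ∈ obs G S (rd G S v - 1) :=
    obs_mono G S (by omega : rd G S x ≤ rd G S v - 1) (rd_spec hP x)
  have hsub : G.neighborSet (forcer G S v) ⊆ obs G S (rd G S v - 1) := by
    intro z hz
    by_cases hzx : z = x
    · rwa [hzx]
    · have : z ∈ G.neighborSet (forcer G S v) \ obs G S (rd G S x - 1) ∨
          z ∈ obs G S (rd G S x - 1) := by
        by_cases hzo : z ∈ obs G S (rd G S x - 1)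
        · exact Or.inr hzo
        · exact Or.inl ⟨hz, hzo⟩
      rcases this with hz' | hz'
      · rw [hu2] at hz'; exact absurd hz' hzx
      · exact obs_mono G S (by omega : rd G S x - 1 ≤ rd G S v - 1) hz'
  exact hvmem.2 (hsub hvmem.1)

include hP in
lemma forcer_inj {x v : V} (hx : 2 ≤ rd G S x) (hv : 2 ≤ rd G S v)
    (h : forcer G S x = forcer G S v) : x = v := by
  rcases lt_trichotomy (rd G S x) (rd G S v) with hlt | heq | hlt
  · exact absurd h (fun h => forcer_inj_aux hP hx hv hlt h)
  · obtain ⟨-, hu2⟩ := forcer_spec hP hx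
    obtain ⟨-, hw2⟩ := forcer_spec hP hv
    rw [h, heq, hw2] at hu2
    exact (Set.singleton_eq_singleton_iff.mp hu2).symm
  · exact absurd h.symm (fun h => forcer_inj_aux hP hv hx hlt h)

include hP in
lemma rd_forcer_le (v : V) : rd G S (forcer G S v) ≤ rd G S v := by
  by_cases hv : 2 ≤ rd G S v
  · exact (rd_forcer_lt hP hv).le
  · rw [forcer_eq_self (by omega)]

include hP in
lemma rd_iterate_le (m : ℕ) (v : V) : rd G S ((forcer G S)^[m] v) ≤ rd G S v := by
  induction m generalizing v with
  | zero => rfl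
  | succ n ih =>
    rw [Function.iterate_succ_apply]
    exact (ih (forcer G S v)).trans (rd_forcer_le hP v)

include hP in
lemma rd_iterate_le_one {n : ℕ} {v : V} (h : rd G S v ≤ n) :
    rd G S ((forcer G S)^[n] v) ≤ 1 := by
  induction n generalizing v with
  | zero =>
    rw [Function.iterate_zero, id_eq]; omega
  | succ n ih =>
    by_cases hv : rd G S v ≤ 1
    · rw [Function.iterate_fixed (forcer_eq_self hv)]; exact hv
    · rw [Function.iterate_succ_apply]
      have hlt := rd_forcer_lt hP (show 2 ≤ rd G S v by omega)
      exact ih (show rd G S (forcer G S v) ≤ n by omega)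

include hP in
lemma iterate_rd_eq {j : ℕ} {x : V} (h : rd G S ((forcer G S)^[j] x) = rd G S x) :
    (forcer G S)^[j] x = x := by
  induction j generalizing x with
  | zero => rfl
  | succ n ih =>
    rw [Function.iterate_succ_apply] at h ⊢
    have h1 : rd G S ((forcer G S)^[n] (forcer G S x)) ≤ rd G S (forcer G S x) :=
      rd_iterate_le hP n _
    have h2 : rd G S (forcer G S x) ≤ rd G S x := rd_forcer_le hP x
    have hfx : rd G S x ≤ 1 := by
      by_contra hc
      have := rd_forcer_lt hP (by omega : 2 ≤ rd G S x)
      omega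
    have hfix : forcer G S x = x := forcer_eq_self hfx
    rw [hfix] at h ⊢
    exact ih h

/-- Two chains meet. -/
def Meets (G : SimpleGraph V) (S : Set V) (x y : V) : Prop :=
  ∃ j, (forcer G S)^[j] x = y ∨ (forcer G S)^[j] y = x

include hP in
lemma merge : ∀ (j : ℕ) (x y : V), (forcer G S)^[j] x = forcer G S y → Meets G S x y := by
  intro j
  induction j with
  | zero =>
    intro x y h
    exact ⟨1, Or.inr h.symm⟩
  | succ n ih =>
    intro x y h
    rw [Function.iterate_succ_apply'] at h
    by_cases hy : rd G S y ≤ 1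
    · rw [forcer_eq_self hy] at h
      exact ⟨n+1, Or.inl (by rw [Function.iterate_succ_apply']; exact h)⟩
    · by_cases hw : rd G S ((forcer G S)^[n] x) ≤ 1
      · rw [forcer_eq_self hw] at h
        exact ih x y h
      · have := forcer_inj hP (by omega) (by omega) h
        exact ⟨n, Or.inl this⟩

include hP in
lemma meets_of_iterate_eq : ∀ (m : ℕ) (x y : V),
    (forcer G S)^[m] x = (forcer G S)^[m] y → Meets G S x y := by
  intro m
  induction m with
  | zero => intro x y h; exact ⟨0, Or.inl h⟩
  | succ n ih =>
    intro x y h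
    rw [Function.iterate_succ_apply, Function.iterate_succ_apply] at h
    obtain ⟨j, hj | hj⟩ := ih _ _ h
    · rw [← Function.iterate_succ_apply] at hj
      exact merge hP (j+1) x y hj
    · rw [← Function.iterate_succ_apply] at hj
      obtain ⟨j', hj'⟩ := merge hP (j+1) y x hj
      exact ⟨j', hj'.symm⟩

include hP in
lemma eq_of_meets_rd_eq {x y : V} (hm : Meets G S x y) (h : rd G S x = rd G S y) : x = y := by
  obtain ⟨j, hj | hj⟩ := hm
  · have : rd G S ((forcer G S)^[j] x) = rd G S x := by rw [hj, h]
    rw [← hj, iterate_rd_eq hP this]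
  · have : rd G S ((forcer G S)^[j] y) = rd G S y := by rw [hj, ← h]
    rw [← hj, iterate_rd_eq hP this]

end Aux2

section Count

variable [Fintype V] {G : SimpleGraph V} {S : Set V} (hP : ∃ T, obs G S T = Set.univ)

include hP in
lemma rd_eq_of_new {k : ℕ} {v : V} (hv : v ∈ obs G S (k+1) \ obs G S k) : rd G S v = k + 1 := by
  have h1 : rd G S v ≤ k + 1 := rd_le hv.1
  have h2 : ¬ rd G S v ≤ k := fun hc => hv.2 (mem_obs_of_rd_le hP hc)
  omega

include hP in
lemma new_card_le (k : ℕ) :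
    (obs G S (k+1) \ obs G S k).ncard ≤ (obs G S 1).ncard := by
  apply Set.ncard_le_ncard_of_injOn (fun v => (forcer G S)^[k+1] v)
  · intro v hv
    have hrd := rd_eq_of_new hP hv
    have h1 : rd G S ((forcer G S)^[k+1] v) ≤ 1 := rd_iterate_le_one hP (by omega)
    exact mem_obs_of_rd_le hP h1
  · intro x hx y hy hxy
    exact eq_of_meets_rd_eq hP (meets_of_iterate_eq hP (k+1) x y hxy)
      (by rw [rd_eq_of_new hP hx, rd_eq_of_new hP hy])

include hP in
lemma obs_card_le (t : ℕ) :
    (obs G S (t+1)).ncard ≤ (t+1) * (obs G S 1).ncard := by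
  induction t with
  | zero => simp
  | succ n ih =>
    have hdec : obs G S (n+2) = obs G S (n+1) ∪ (obs G S (n+2) \ obs G S (n+1)) :=
      (Set.union_diff_cancel (obs_succ_mono G S (n+1))).symm
    calc (obs G S (n+2)).ncard
        ≤ (obs G S (n+1)).ncard + (obs G S (n+2) \ obs G S (n+1)).ncard := by
          have hle := Set.ncard_union_le (obs G S (n+1)) (obs G S (n+2) \ obs G S (n+1))
          rw [← hdec] at hle; exact hle
      _ ≤ (n+1) * (obs G S 1).ncard + (obs G S 1).ncard := by
          exact Nat.add_le_add ih (new_card_le hP (n+1))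
      _ = (n+2) * (obs G S 1).ncard := by ring

end Count

lemma obs1_card_le [Fintype V] (G : SimpleGraph V) [DecidableRel G.Adj] (S : Set V) :
    (obs G S 1).ncard ≤ S.ncard * (G.maxDegree + 1) := by
  classical
  have hfin : S.Finite := Set.toFinite S
  set F : Finset V := hfin.toFinset.biUnion (fun u => insert u (G.neighborFinset u)) with hF
  have hsub : obs G S 1 ⊆ ↑F := by
    intro w hw
    rcases hw with hw | ⟨u, hu, huw⟩
    · exact Finset.mem_coe.mpr (Finset.mem_biUnion.mpr
        ⟨w, hfin.mem_toFinset.mpr hw, Finset.mem_insert_self _ _⟩)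
    · exact Finset.mem_coe.mpr (Finset.mem_biUnion.mpr
        ⟨u, hfin.mem_toFinset.mpr hu,
          Finset.mem_insert.mpr (Or.inr (by rwa [SimpleGraph.mem_neighborFinset]))⟩)
  have h1 : (obs G S 1).ncard ≤ F.card := by
    have := Set.ncard_le_ncard hsub F.finite_toSet
    rwa [Set.ncard_coe_finset] at this
  have h2 : F.card ≤ hfin.toFinset.card * (G.maxDegree + 1) := by
    refine Finset.card_biUnion_le.trans ?_
    have hb : ∀ u ∈ hfin.toFinset, (insert u (G.neighborFinset u)).card ≤ G.maxDegree + 1 := by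
      intro u _
      refine (Finset.card_insert_le _ _).trans ?_
      have : (G.neighborFinset u).card = G.degree u := rfl
      rw [this]
      have := G.degree_le_maxDegree u
      omega
    have := Finset.sum_le_card_nsmul hfin.toFinset
      (fun u => (insert u (G.neighborFinset u)).card) (G.maxDegree + 1) hb
    simpa [smul_eq_mul] using this
  have h3 : hfin.toFinset.card = S.ncard := (Set.ncard_eq_toFinset_card S hfin).symm
  rw [h3] at h2
  exact h1.trans h2

theorem stmt5 [Fintype V] (G : SimpleGraph V) [DecidableRel G.Adj] (hG : G.Connected)
    (h : (gamma G : ℤ) = ⌈(Fintype.card V : ℚ) / (G.maxDegree + 1)⌉) :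
    (thpd G : ℤ) = ⌈(Fintype.card V : ℚ) / (G.maxDegree + 1)⌉ := by
  classical
  have hDomUniv : IsDomSet G (Set.univ : Set V) :=
    Set.eq_univ_of_univ_subset Set.subset_union_left
  have hgne : {k | ∃ S : Set V, IsDomSet G S ∧ S.ncard = k}.Nonempty :=
    ⟨(Set.univ : Set V).ncard, Set.univ, hDomUniv, rfl⟩
  obtain ⟨S₁, hS₁dom, hS₁card⟩ := Nat.sInf_mem hgne
  have hS₁card' : S₁.ncard = gamma G := hS₁card
  have hobs1 : obs G S₁ 1 = Set.univ := hS₁dom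
  have hS₁pds : IsPDS G S₁ := ⟨1, hobs1⟩
  have hpt1 : ptpd G S₁ = 1 := by
    have hmem : (1 : ℕ) ∈ {t | 1 ≤ t ∧ obs G S₁ t = Set.univ} := ⟨le_refl 1, hobs1⟩
    have hle : ptpd G S₁ ≤ 1 := Nat.sInf_le hmem
    have hge : 1 ≤ ptpd G S₁ := (Nat.sInf_mem ⟨1, hmem⟩).1
    omega
  have hthle : thpd G ≤ gamma G :=
    Nat.sInf_le ⟨S₁, hS₁pds, by rw [hpt1, mul_one, hS₁card']⟩
  have hthne : {m | ∃ S : Set V, IsPDS G S ∧ m = S.ncard * ptpd G S}.Nonempty :=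
    ⟨gamma G, S₁, hS₁pds, by rw [hpt1, mul_one, hS₁card']⟩
  obtain ⟨S₀, hS₀pds, hS₀eq⟩ := Nat.sInf_mem hthne
  have hS₀eq' : thpd G = S₀.ncard * ptpd G S₀ := hS₀eq
  have hP : ∃ T, obs G S₀ T = Set.univ := hS₀pds
  have hptmem : 1 ≤ ptpd G S₀ ∧ obs G S₀ (ptpd G S₀) = Set.univ := by
    obtain ⟨T, hT⟩ := hS₀pds
    have hmem : max T 1 ∈ {t | 1 ≤ t ∧ obs G S₀ t = Set.univ} := by
      refine ⟨le_max_right T 1, Set.eq_univ_of_univ_subset ?_⟩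
      rw [← hT]
      exact obs_mono G S₀ (le_max_left T 1)
    exact Nat.sInf_mem ⟨_, hmem⟩
  obtain ⟨m, hm⟩ : ∃ m, ptpd G S₀ = m + 1 := ⟨ptpd G S₀ - 1, by omega⟩
  have hcard : Fintype.card V ≤ ptpd G S₀ * (S₀.ncard * (G.maxDegree + 1)) := by
    calc Fintype.card V = (Set.univ : Set V).ncard := by
          rw [Set.ncard_univ, Nat.card_eq_fintype_card]
      _ = (obs G S₀ (ptpd G S₀)).ncard := by rw [hptmem.2]
      _ ≤ (ptpd G S₀) * (obs G S₀ 1).ncard := by rw [hm]; exact obs_card_le hP m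
      _ ≤ (ptpd G S₀) * (S₀.ncard * (G.maxDegree + 1)) :=
          Nat.mul_le_mul_left _ (obs1_card_le G S₀)
  have hnth : Fintype.card V ≤ thpd G * (G.maxDegree + 1) := by
    rw [hS₀eq']
    calc Fintype.card V ≤ ptpd G S₀ * (S₀.ncard * (G.maxDegree + 1)) := hcard
      _ = S₀.ncard * ptpd G S₀ * (G.maxDegree + 1) := by ring
  have hD : (0:ℚ) < (G.maxDegree : ℚ) + 1 := by positivity
  have hceil : ⌈(Fintype.card V : ℚ) / ((G.maxDegree : ℚ) + 1)⌉ ≤ (thpd G : ℤ) := by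
    rw [Int.ceil_le, div_le_iff₀ hD]
    push_cast
    exact_mod_cast hnth
  have h2 : (thpd G : ℤ) ≤ (gamma G : ℤ) := by exact_mod_cast hthle
  linarith [hceil, h2, h.le, h.ge]
end

section
/- If G is a connected unit interval graph with power dominating set S, then for every k ≥ 2, |P^(k)(S)| ≤ 2|S|. -/
open SimpleGraph Set

variable {V : Type*} {W : Type*}

lemma btw_split {a b c x : ℝ} (h1 : min a b < x) (h2 : x < max a b) :
    (min a c < x ∧ x < max a c) ∨ x = c ∨ (min c b < x ∧ x < max c b) := by
  rcases lt_trichotomy x c with h | h | h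
  · rcases min_lt_iff.mp h1 with ha | hb
    · exact Or.inl ⟨min_lt_iff.mpr (Or.inl ha), lt_max_iff.mpr (Or.inr h)⟩
    · exact Or.inr (Or.inr ⟨min_lt_iff.mpr (Or.inr hb), lt_max_iff.mpr (Or.inl h)⟩)
  · exact Or.inr (Or.inl h)
  · rcases lt_max_iff.mp h2 with ha | hb
    · exact Or.inl ⟨min_lt_iff.mpr (Or.inr h), lt_max_iff.mpr (Or.inl ha)⟩
    · exact Or.inr (Or.inr ⟨min_lt_iff.mpr (Or.inl h), lt_max_iff.mpr (Or.inr hb)⟩)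

lemma obs_mono_s17 (G : SimpleGraph V) (S : Set V) (k : ℕ) : obs G S k ⊆ obs G S (k + 1) := by
  match k with
  | 0 => exact Set.subset_union_left
  | (n + 1) => exact Set.subset_union_left

lemma S_subset_obs (G : SimpleGraph V) (S : Set V) (k : ℕ) : S ⊆ obs G S k := by
  induction k with
  | zero => exact subset_rfl
  | succ n ih => exact ih.trans (obs_mono_s17 G S n)

lemma star_lemma (G : SimpleGraph V) (ℓ : V → ℝ) (hinj : Function.Injective ℓ)
    (hrep : ∀ u v, G.Adj u v ↔ u ≠ v ∧ |ℓ u - ℓ v| ≤ 1) (S : Set V) :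
    ∀ k : ℕ, ∀ u ∈ obs G S k, ∃ s ∈ S,
      ∀ v, min (ℓ s) (ℓ u) < ℓ v → ℓ v < max (ℓ s) (ℓ u) → v ∈ obs G S k
  | 0, u, hu => ⟨u, hu, by intro v h1 h2; simp only [min_self, max_self] at h1 h2; linarith⟩
  | 1, u, hu => by
    rcases hu with hu | hu
    · exact ⟨u, hu, by intro v h1 h2; simp only [min_self, max_self] at h1 h2; linarith⟩
    · obtain ⟨s, hs, hadj⟩ := hu
      refine ⟨s, hs, ?_⟩
      intro v h1 h2
      by_cases hvu : v = u
      · exact Or.inr ⟨s, hs, hvu ▸ hadj⟩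
      · by_cases hvs : v = s
        · exact Or.inl (hvs ▸ hs)
        · have h3 : |ℓ s - ℓ u| ≤ 1 := ((hrep s u).mp hadj).2
          rw [abs_sub_le_iff] at h3
          have habs : |ℓ s - ℓ v| ≤ 1 := by
            rw [abs_sub_le_iff]
            rcases le_total (ℓ s) (ℓ u) with h4 | h4
            · rw [min_eq_left h4] at h1; rw [max_eq_right h4] at h2
              constructor <;> linarith
            · rw [min_eq_right h4] at h1; rw [max_eq_left h4] at h2
              constructor <;> linarith
          exact Or.inr ⟨s, hs, (hrep s v).mpr ⟨fun h => hvs h.symm, habs⟩⟩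
  | (n + 2), u, hu => by
    rcases hu with hu | hu
    · obtain ⟨s, hs, hbet⟩ := star_lemma G ℓ hinj hrep S (n + 1) u hu
      exact ⟨s, hs, fun v h1 h2 => obs_mono_s17 G S (n + 1) (hbet v h1 h2)⟩
    · obtain ⟨u', hu', hforce⟩ := hu
      have huN : u ∈ G.neighborSet u' \ obs G S (n + 1) := by rw [hforce]; rfl
      have hadj : G.Adj u' u := huN.1
      have habs : |ℓ u' - ℓ u| ≤ 1 := ((hrep u' u).mp hadj).2
      rw [abs_sub_le_iff] at habs
      have hmid : ∀ v, min (ℓ u') (ℓ u) < ℓ v → ℓ v < max (ℓ u') (ℓ u) →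
          v ∈ obs G S (n + 2) := by
        intro v h1 h2
        by_cases hvu : v = u
        · exact Or.inr ⟨u', hu', hvu ▸ hforce⟩
        · by_cases hvu' : v = u'
          · exact obs_mono_s17 G S (n + 1) (hvu' ▸ hu')
          · have habsv : |ℓ u' - ℓ v| ≤ 1 := by
              rw [abs_sub_le_iff]
              rcases le_total (ℓ u') (ℓ u) with h4 | h4
              · rw [min_eq_left h4] at h1; rw [max_eq_right h4] at h2
                constructor <;> linarith
              · rw [min_eq_right h4] at h1; rw [max_eq_left h4] at h2
                constructor <;> linarith
            have hadjv : G.Adj u' v := (hrep u' v).mpr ⟨fun h => hvu' h.symm, habsv⟩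
            by_cases hvA : v ∈ obs G S (n + 1)
            · exact obs_mono_s17 G S (n + 1) hvA
            · have hmem : v ∈ G.neighborSet u' \ obs G S (n + 1) := ⟨hadjv, hvA⟩
              rw [hforce] at hmem
              exact absurd hmem hvu
      obtain ⟨s, hs, hbet⟩ := star_lemma G ℓ hinj hrep S (n + 1) u' hu'
      refine ⟨s, hs, ?_⟩
      intro v h1 h2
      rcases btw_split (c := ℓ u') h1 h2 with h | h | h
      · exact obs_mono_s17 G S (n + 1) (hbet v h.1 h.2)
      · have : v = u' := hinj h
        exact obs_mono_s17 G S (n + 1) (this ▸ hu')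
      · exact hmid v h.1 h.2

lemma forceDir (G : SimpleGraph V) (ℓ : V → ℝ) (hinj : Function.Injective ℓ)
    (hrep : ∀ u v, G.Adj u v ↔ u ≠ v ∧ |ℓ u - ℓ v| ≤ 1) (S : Set V) (n : ℕ) (u w : V)
    (hu : u ∈ obs G S (n + 1)) (hforce : G.neighborSet u \ obs G S (n + 1) = {w})
    (hw : w ∉ obs G S (n + 1)) (hlt : ℓ u < ℓ w) :
    ∃ s ∈ S, ℓ s < ℓ w ∧ ∀ v, ℓ s < ℓ v → ℓ v < ℓ w → v ∈ obs G S (n + 1) := by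
  have hwN : w ∈ G.neighborSet u \ obs G S (n + 1) := by rw [hforce]; rfl
  have habs : |ℓ u - ℓ w| ≤ 1 := ((hrep u w).mp hwN.1).2
  rw [abs_sub_le_iff] at habs
  have hmid : ∀ v, ℓ u < ℓ v → ℓ v < ℓ w → v ∈ obs G S (n + 1) := by
    intro v h1 h2
    by_contra hvA
    have hadj : G.Adj u v := by
      refine (hrep u v).mpr ⟨fun h => ?_, ?_⟩
      · rw [h] at h1; exact lt_irrefl _ h1
      · rw [abs_sub_le_iff]; constructor <;> linarith
    have hmem : v ∈ G.neighborSet u \ obs G S (n + 1) := ⟨hadj, hvA⟩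
    rw [hforce] at hmem
    have : v = w := hmem
    rw [this] at h2; exact lt_irrefl _ h2
  obtain ⟨s, hs, hbet⟩ := star_lemma G ℓ hinj hrep S (n + 1) u hu
  have hsA : s ∈ obs G S (n + 1) := S_subset_obs G S (n + 1) hs
  have hsw : ℓ s ≠ ℓ w := fun h => hw (hinj h ▸ hsA)
  have hslt : ℓ s < ℓ w := by
    rcases lt_or_gt_of_ne hsw with h | h
    · exact h
    · exact absurd (hbet w (min_lt_iff.mpr (Or.inr hlt)) (lt_max_iff.mpr (Or.inl h))) hw
  refine ⟨s, hs, hslt, ?_⟩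
  intro v h1 h2
  rcases lt_trichotomy (ℓ v) (ℓ u) with h | h | h
  · exact hbet v (min_lt_iff.mpr (Or.inl h1)) (lt_max_iff.mpr (Or.inr h))
  · have : v = u := hinj h
    exact this ▸ hu
  · exact hmid v h h2

theorem stmt17 [Fintype V] (G : SimpleGraph V) (hG : G.Connected)
    (ℓ : V → ℝ) (hinj : Function.Injective ℓ)
    (hrep : ∀ u v, G.Adj u v ↔ u ≠ v ∧ |ℓ u - ℓ v| ≤ 1)
    (S : Set V) (hS : IsPDS G S) :
    ∀ k : ℕ, 2 ≤ k → (newObs G S k).ncard ≤ 2 * S.ncard := by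
  intro k hk
  obtain ⟨m, rfl⟩ : ∃ m, k = m + 2 := ⟨k - 2, by omega⟩
  have hex : ∀ w, w ∈ newObs G S (m + 2) → ∃ p : V × Bool, p.1 ∈ S ∧
      ((p.2 = true ∧ ℓ p.1 < ℓ w ∧
          ∀ v, ℓ p.1 < ℓ v → ℓ v < ℓ w → v ∈ obs G S (m + 1)) ∨
       (p.2 = false ∧ ℓ w < ℓ p.1 ∧
          ∀ v, ℓ w < ℓ v → ℓ v < ℓ p.1 → v ∈ obs G S (m + 1))) := by
    intro w hw
    have hw2 : w ∈ obs G S (m + 2) := hw.1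
    have hw1 : w ∉ obs G S (m + 1) := hw.2
    rcases hw2 with h | h
    · exact absurd h hw1
    · obtain ⟨u, hu, hforce⟩ := h
      have hwN : w ∈ G.neighborSet u \ obs G S (m + 1) := by rw [hforce]; rfl
      have hne : ℓ u ≠ ℓ w := fun h => (((hrep u w).mp hwN.1).1) (hinj h)
      rcases lt_or_gt_of_ne hne with hlt | hlt
      · obtain ⟨s, hs, h1, h2⟩ := forceDir G ℓ hinj hrep S m u w hu hforce hw1 hlt
        exact ⟨(s, true), hs, Or.inl ⟨rfl, h1, h2⟩⟩
      · have hinj' : Function.Injective (fun v => -ℓ v) :=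
          fun a b h => hinj (neg_injective h)
        have hrep' : ∀ a b, G.Adj a b ↔ a ≠ b ∧
            |(fun v => -ℓ v) a - (fun v => -ℓ v) b| ≤ 1 := by
          intro a b
          rw [hrep a b]
          show _ ↔ a ≠ b ∧ |(-ℓ a) - (-ℓ b)| ≤ 1
          rw [show -ℓ a - -ℓ b = -(ℓ a - ℓ b) by ring, abs_neg]
        have hlt' : (fun v => -ℓ v) u < (fun v => -ℓ v) w := neg_lt_neg hlt
        obtain ⟨s, hs, h1, h2⟩ := forceDir G (fun v => -ℓ v) hinj' hrep' S m u w hu hforce hw1 hlt'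
        have h1' : -ℓ s < -ℓ w := h1
        have h2' : ∀ v, -ℓ s < -ℓ v → -ℓ v < -ℓ w → v ∈ obs G S (m + 1) := h2
        refine ⟨(s, false), hs, Or.inr ⟨rfl, by linarith, ?_⟩⟩
        intro v hv1 hv2
        exact h2' v (by linarith) (by linarith)
  choose! f hf1 hf2 using hex
  have hmaps : ∀ w ∈ newObs G S (m + 2), f w ∈ S ×ˢ (Set.univ : Set Bool) :=
    fun w hw => ⟨hf1 w hw, trivial⟩
  have hinjOn : Set.InjOn f (newObs G S (m + 2)) := by
    intro w hw w' hw' heq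
    have key : ∀ x y : V, x ∈ newObs G S (m + 2) → y ∈ newObs G S (m + 2) → f x = f y →
        ℓ x < ℓ y → False := by
      intro x y hx hy hxy hlt
      rcases hf2 x hx with ⟨hb, h1, h2⟩ | ⟨hb, h1, h2⟩ <;>
        rcases hf2 y hy with ⟨hb', h1', h2'⟩ | ⟨hb', h1', h2'⟩
      · rw [hxy] at h1
        exact hx.2 (h2' x h1 hlt)
      · rw [hxy, hb'] at hb; exact absurd hb (by simp)
      · rw [hxy, hb'] at hb; exact absurd hb (by simp)
      · rw [← hxy] at h1'
        exact hy.2 (h2 y hlt h1')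
    rcases lt_trichotomy (ℓ w) (ℓ w') with h | h | h
    · exact absurd (key w w' hw hw' heq h) not_false
    · exact hinj h
    · exact absurd (key w' w hw' hw heq.symm h) not_false
  have hcard : (S ×ˢ (Set.univ : Set Bool)).ncard = 2 * S.ncard := by
    rw [← Nat.card_coe_set_eq, Nat.card_congr (Equiv.Set.prod S Set.univ), Nat.card_prod,
      Nat.card_coe_set_eq, Nat.card_congr (Equiv.Set.univ Bool), Nat.card_eq_fintype_card]
    simp [Nat.mul_comm]
  calc (newObs G S (m + 2)).ncard ≤ (S ×ˢ (Set.univ : Set Bool)).ncard :=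
        Set.ncard_le_ncard_of_injOn f hmaps hinjOn (Set.toFinite _)
    _ = 2 * S.ncard := hcard
end
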